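/- arXiv:1806.00726 — 6 statements merged into one kernel-verified Lean document; each statement's English description precedes it below -/
import Mathlib

section
/- Fix i ≥ 0 and write i = 2m or i = 2m − 1. Then: (1) h(x,x) ∈ 2^m A for every x ∈ A_i; (2) h(x+y, x+y) − h(x,x) − h(y,y) ∈ 2^{m+1}A for all x, y ∈ A_i; (3) for λ = λ₀ + πλ₁ ∈ B with λ₀, λ₁ ∈ A, and x ∈ A_i, one has h(λx, λx) − λ₀²·h(x,x) ∈ 2^{m+1}A. Consequently x ↦ 2^{−m}h(x,x) mod 2 induces a well-defined additive, Frobenius-semilinear map A_i/πA_i → κ whose kernel is B_i/πA_i; in particular B_i is a B-submodule of A_i containing πA_i. -/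
/-- `A_i = {x ∈ L : h(x,L) ⊆ π^i B}`. -/
def AiSet {B L : Type*} [CommRing B] [AddCommGroup L] [Module B L]
    (π : B) (h : L → L → B) (i : ℕ) : Set L :=
  {x | ∀ w : L, π ^ i ∣ h x w}

/-- `B_i = {x ∈ A_i : h(x,x) ∈ 2^{m+1} A}` where `m = ⌈i/2⌉`. -/
def BiSet (A : Type*) {B L : Type*} [CommRing A] [CommRing B] [Algebra A B]
    [AddCommGroup L] [Module B L] (π : B) (h : L → L → B) (i : ℕ) : Set L :=
  {x | x ∈ AiSet π h i ∧ ∃ a : A, h x x = algebraMap A B (2 ^ ((i + 1) / 2 + 1) * a)}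

/-- basic congruence properties of the norm `h(x,x)` on `A_i`, and the
induced additive Frobenius-semilinear map `A_i/πA_i → κ` with kernel `B_i/πA_i`. -/
theorem norm_congruences_and_additive_map
    {A : Type*} [CommRing A] [IsDomain A] [IsDiscreteValuationRing A] [CharZero A]
    (hmax : IsLocalRing.maximalIdeal A = Ideal.span {2})
    [IsAdicComplete (IsLocalRing.maximalIdeal A) A]
    [CharP (IsLocalRing.ResidueField A) 2]
    [PerfectRing (IsLocalRing.ResidueField A) 2]
    (δ : A) (hδunit : IsUnit δ) (hδ1 : (2 : A) ∣ (δ - 1))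
    {B : Type*} [CommRing B] [IsDomain B] [Algebra A B]
    (π : B) (hπ : π ^ 2 = algebraMap A B (2 * δ))
    (σ : B ≃ₐ[A] B) (hσπ : σ π = -π) (hσinv : ∀ b : B, σ (σ b) = b)
    (hBfree : ∀ b : B, ∃! p : A × A, b = algebraMap A B p.1 + algebraMap A B p.2 * π)
    {L : Type*} [AddCommGroup L] [Module B L] [Module.Free B L] [Module.Finite B L]
    (h : L → L → B)
    (hadd : ∀ x y z : L, h (x + y) z = h x z + h y z)
    (hsmul : ∀ (a b : B) (v w : L), h (a • v) (b • w) = σ a * b * h v w)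
    (hsymm : ∀ v w : L, h w v = σ (h v w))
    (hnd : ∀ v : L, (∀ w : L, h v w = 0) → v = 0)
    (i : ℕ) :
    -- write m = (i+1)/2, so that i = 2m or i = 2m-1
    (∀ x ∈ AiSet π h i, ∃ a : A, h x x = algebraMap A B (2 ^ ((i + 1) / 2) * a)) ∧
    (∀ x ∈ AiSet π h i, ∀ y ∈ AiSet π h i, ∃ a : A,
        h (x + y) (x + y) - h x x - h y y = algebraMap A B (2 ^ ((i + 1) / 2 + 1) * a)) ∧
    (∀ lam0 lam1 : A, ∀ x ∈ AiSet π h i, ∃ a : A,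
        h ((algebraMap A B lam0 + algebraMap A B lam1 * π) • x)
            ((algebraMap A B lam0 + algebraMap A B lam1 * π) • x)
          - algebraMap A B (lam0 ^ 2) * h x x
          = algebraMap A B (2 ^ ((i + 1) / 2 + 1) * a)) ∧
    (∃ q : L → IsLocalRing.ResidueField A,
      (∀ x ∈ AiSet π h i, ∀ a : A,
          h x x = algebraMap A B (2 ^ ((i + 1) / 2) * a) → q x = IsLocalRing.residue A a) ∧
      (∀ x ∈ AiSet π h i, ∀ y ∈ AiSet π h i,
          (∃ z ∈ AiSet π h i, x - y = π • z) → q x = q y) ∧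
      (∀ x ∈ AiSet π h i, ∀ y ∈ AiSet π h i, q (x + y) = q x + q y) ∧
      (∀ c : A, ∀ x ∈ AiSet π h i,
          q ((algebraMap A B c) • x) = (IsLocalRing.residue A c) ^ 2 * q x) ∧
      (∀ x ∈ AiSet π h i, (q x = 0 ↔ x ∈ BiSet A π h i))) ∧
    (∀ x ∈ AiSet π h i, π • x ∈ BiSet A π h i) ∧
    (∀ x ∈ BiSet A π h i, ∀ y ∈ BiSet A π h i, x + y ∈ BiSet A π h i) ∧
    (∀ (b : B), ∀ x ∈ BiSet A π h i, b • x ∈ BiSet A π h i) := by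
  classical
  set m : ℕ := (i + 1) / 2 with hm
  -- injectivity of algebraMap A B
  have hinj : Function.Injective (algebraMap A B) := by
    intro a a' hEq
    have h1 : algebraMap A B a = algebraMap A B (a, (0:A)).1
        + algebraMap A B (a, (0:A)).2 * π := by simp
    have h2 : algebraMap A B a = algebraMap A B (a', (0:A)).1
        + algebraMap A B (a', (0:A)).2 * π := by simp [hEq]
    have := (hBfree (algebraMap A B a)).unique h1 h2
    exact congrArg Prod.fst this
  have hσA : ∀ a : A, σ (algebraMap A B a) = algebraMap A B a := fun a => σ.commutes a
  have h2B : (2 : B) ≠ 0 := by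
    intro hc
    have : algebraMap A B (2 : A) = algebraMap A B 0 := by
      rw [map_ofNat, map_zero]; exact hc
    exact two_ne_zero (hinj this)
  -- key lemma: trace of elements divisible by π^i
  have key2 : ∀ t : B, π ^ i ∣ t →
      ∃ a : A, t + σ t = algebraMap A B (2 ^ (m + 1) * a) := by
    rintro t ⟨u, htu⟩
    obtain ⟨⟨u0, u1⟩, hu, -⟩ := hBfree u
    simp only at hu
    have hσu : σ u = algebraMap A B u0 - algebraMap A B u1 * π := by
      rw [hu, map_add, map_mul, hσA, hσA, hσπ]; ring
    have hσt : σ t = (-π) ^ i * σ u := by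
      rw [htu, map_mul, map_pow, hσπ]
    rcases Nat.even_or_odd i with ⟨k, hk⟩ | ⟨k, hk⟩
    · -- i = k + k
      have hmk : m = k := by omega
      refine ⟨δ ^ k * u0, ?_⟩
      have hπi : π ^ i = algebraMap A B ((2 * δ) ^ k) := by
        rw [map_pow, ← hπ, ← pow_mul, hk, two_mul]
      have hev : (-π : B) ^ i = π ^ i := Even.neg_pow ⟨k, hk⟩ π
      rw [hσt, hev, hσu, htu, hu, hπi, hmk]
      rw [show algebraMap A B ((2 * δ) ^ k) * (algebraMap A B u0 + algebraMap A B u1 * π)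
          + algebraMap A B ((2 * δ) ^ k) * (algebraMap A B u0 - algebraMap A B u1 * π)
          = algebraMap A B ((2 * δ) ^ k) * ((2 : B) * algebraMap A B u0) by ring]
      rw [show (2 : B) = algebraMap A B 2 from (map_ofNat _ 2).symm, ← map_mul, ← map_mul]
      congr 1
      ring
    · -- i = 2k + 1
      have hmk : m = k + 1 := by omega
      refine ⟨δ ^ (k + 1) * u1, ?_⟩
      have hodd : (-π : B) ^ i = -(π ^ i) := Odd.neg_pow ⟨k, hk⟩ π
      have hπi1 : π ^ i * π = algebraMap A B ((2 * δ) ^ (k + 1)) := by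
        rw [map_pow, ← hπ, ← pow_mul]
        rw [show π ^ i * π = π ^ (i + 1) by ring, hk]
        ring_nf
      have : t + σ t = π ^ i * π * (2 * algebraMap A B u1) := by
        rw [hσt, hodd, hσu, htu, hu]; ring
      rw [this, hπi1, hmk]
      rw [show (2 : B) = algebraMap A B 2 from (map_ofNat _ 2).symm, ← map_mul, ← map_mul]
      congr 1
      ring
  -- fixed points divisible by π^i
  have key1 : ∀ t : B, π ^ i ∣ t → σ t = t →
      ∃ a : A, t = algebraMap A B (2 ^ m * a) := by
    intro t hdvd hfix
    obtain ⟨a, ha⟩ := key2 t hdvd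
    refine ⟨a, mul_left_cancel₀ h2B ?_⟩
    have : (2 : B) * t = t + σ t := by rw [hfix]; ring
    rw [this, ha, show (2 : B) = algebraMap A B 2 from (map_ofNat _ 2).symm, ← map_mul]
    congr 1
    ring
  -- membership lemmas
  have hAi_smul : ∀ (b : B) (x : L), x ∈ AiSet π h i → b • x ∈ AiSet π h i := by
    intro b x hx w
    have : h (b • x) ((1 : B) • w) = σ b * 1 * h x w := hsmul b 1 x w
    rw [one_smul] at this
    rw [this]
    exact (hx w).mul_left _
  have hAi_add : ∀ x y : L, x ∈ AiSet π h i → y ∈ AiSet π h i → x + y ∈ AiSet π h i := by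
    intro x y hx hy w
    rw [hadd]
    exact dvd_add (hx w) (hy w)
  have hadd2 : ∀ x y z : L, h x (y + z) = h x y + h x z := by
    intro x y z
    rw [hsymm (y + z) x, hadd, map_add, ← hsymm y x, ← hsymm z x]
  have hfixself : ∀ x : L, σ (h x x) = h x x := fun x => (hsymm x x).symm
  -- part 1
  have part1 : ∀ x ∈ AiSet π h i, ∃ a : A, h x x = algebraMap A B (2 ^ m * a) :=
    fun x hx => key1 (h x x) (hx x) (hfixself x)
  -- part 2
  have part2 : ∀ x ∈ AiSet π h i, ∀ y ∈ AiSet π h i, ∃ a : A,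
      h (x + y) (x + y) - h x x - h y y = algebraMap A B (2 ^ (m + 1) * a) := by
    intro x hx y hy
    obtain ⟨a, ha⟩ := key2 (h x y) (hx y)
    refine ⟨a, ?_⟩
    have hexp : h (x + y) (x + y) = h x x + h x y + h y x + h y y := by
      rw [hadd, hadd2, hadd2]; ring
    have hyx : h y x = σ (h x y) := hsymm x y
    rw [hexp, hyx, ← ha]; ring
  -- norm of an element of B
  have hnorm : ∀ b0 b1 : A,
      σ (algebraMap A B b0 + algebraMap A B b1 * π)
        * (algebraMap A B b0 + algebraMap A B b1 * π)
        = algebraMap A B (b0 ^ 2 - 2 * δ * b1 ^ 2) := by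
    intro b0 b1
    rw [map_add, map_mul, hσA, hσA, hσπ]
    have : (algebraMap A B b0 + algebraMap A B b1 * -π)
        * (algebraMap A B b0 + algebraMap A B b1 * π)
        = algebraMap A B b0 ^ 2 - algebraMap A B b1 ^ 2 * π ^ 2 := by ring
    rw [this, hπ, ← map_pow, ← map_pow, ← map_mul, ← map_sub]
    congr 1
    ring
  -- part 3
  have part3 : ∀ lam0 lam1 : A, ∀ x ∈ AiSet π h i, ∃ a : A,
      h ((algebraMap A B lam0 + algebraMap A B lam1 * π) • x)
          ((algebraMap A B lam0 + algebraMap A B lam1 * π) • x)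
        - algebraMap A B (lam0 ^ 2) * h x x
        = algebraMap A B (2 ^ (m + 1) * a) := by
    intro lam0 lam1 x hx
    obtain ⟨a, ha⟩ := part1 x hx
    refine ⟨-(δ * lam1 ^ 2 * a), ?_⟩
    rw [hsmul, hnorm, ha]
    rw [← map_mul, ← map_mul, ← map_sub]
    congr 1
    ring
  -- uniqueness of the coefficient in part 1
  have hauniq : ∀ a a' : A,
      algebraMap A B (2 ^ m * a) = algebraMap A B (2 ^ m * a') → a = a' := by
    intro a a' hEq
    have := hinj hEq
    exact mul_left_cancel₀ (pow_ne_zero m (two_ne_zero)) this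
  -- residue of 2 is 0
  have hres2 : IsLocalRing.residue A 2 = 0 := by
    have h2mem : (2 : A) ∈ IsLocalRing.maximalIdeal A := by
      rw [hmax]; exact Ideal.mem_span_singleton_self 2
    exact Ideal.Quotient.eq_zero_iff_mem.mpr h2mem
  have hresshift : ∀ a s : A, IsLocalRing.residue A (a + 2 * s) = IsLocalRing.residue A a := by
    intro a s
    rw [map_add, map_mul, hres2, zero_mul, add_zero]
  -- the map q
  refine ⟨part1, part2, part3, ?_, ?_, ?_, ?_⟩
  · -- construction of q
    obtain ⟨Q, hQ⟩ : ∃ Q : L → IsLocalRing.ResidueField A,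
        ∀ x (hx : x ∈ AiSet π h i), Q x = IsLocalRing.residue A ((part1 x hx).choose) :=
      ⟨fun x => if hx : x ∈ AiSet π h i
          then IsLocalRing.residue A ((part1 x hx).choose) else 0,
        fun x hx => dif_pos hx⟩
    have qspec : ∀ x, x ∈ AiSet π h i → ∀ a : A,
        h x x = algebraMap A B (2 ^ m * a) → Q x = IsLocalRing.residue A a := by
      intro x hx a hEq
      rw [hQ x hx]
      exact congrArg _ (hauniq _ _ ((part1 x hx).choose_spec.symm.trans hEq))
    refine ⟨Q, fun x hx a hEq => qspec x hx a hEq, ?_, ?_, ?_, ?_⟩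
    · -- invariance mod π • A_i
      rintro x hx y hy ⟨z, hz, hxyz⟩
      obtain ⟨ay, hay⟩ := part1 y hy
      obtain ⟨c, hc⟩ := part1 z hz
      have hdvd : π ^ i ∣ h y (π • z) := by
        have hyπz : h y (π • z) = π * h y z := by
          have := hsmul 1 π y z
          rw [one_smul, map_one, one_mul] at this
          exact this
        rw [hyπz]
        exact (hy z).mul_left π
      obtain ⟨a2, ha2⟩ := key2 (h y (π • z)) hdvd
      · have hx_eq : x = y + π • z := by
          rw [← hxyz]; abel
        have hπz2 : h (π • z) (π • z) = algebraMap A B (2 ^ (m + 1) * (-(δ * c))) := by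
          rw [hsmul, hσπ, hc]
          rw [show -π * π = -(π ^ 2) by ring, hπ, ← map_neg, ← map_mul]
          congr 1
          ring
        have hcomb : algebraMap A B (2 ^ m * ay) + algebraMap A B (2 ^ (m + 1) * a2)
            + algebraMap A B (2 ^ (m + 1) * (-(δ * c)))
            = algebraMap A B (2 ^ m * (ay + 2 * (a2 + -(δ * c)))) := by
          rw [← map_add, ← map_add]
          congr 1
          ring
        have hxx : h x x = algebraMap A B (2 ^ m * (ay + 2 * (a2 + -(δ * c)))) := by
          rw [hx_eq, hadd, hadd2, hadd2]
          rw [show h (π • z) y = σ (h y (π • z)) from hsymm y (π • z)]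
          linear_combination hay + ha2 + hπz2 + hcomb
        rw [qspec x hx _ hxx, qspec y hy _ hay]
        exact hresshift ay (a2 + -(δ * c))
    · -- additivity
      intro x hx y hy
      obtain ⟨ax, hax⟩ := part1 x hx
      obtain ⟨ay, hay⟩ := part1 y hy
      obtain ⟨s, hs⟩ := part2 x hx y hy
      have hxy : h (x + y) (x + y) = algebraMap A B (2 ^ m * (ax + ay + 2 * s)) := by
        have : h (x + y) (x + y) = h x x + h y y
            + algebraMap A B (2 ^ (m + 1) * s) := by rw [← hs]; ring
        rw [this, hax, hay, ← map_add, ← map_add]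
        congr 1
        ring
      rw [qspec _ (hAi_add x y hx hy) _ hxy, qspec x hx _ hax, qspec y hy _ hay]
      rw [show ax + ay + 2 * s = (ax + ay) + 2 * s from rfl, hresshift, map_add]
    · -- semilinearity
      intro c x hx
      obtain ⟨ax, hax⟩ := part1 x hx
      obtain ⟨s, hs⟩ := part3 c 0 x hx
      have hsimp : algebraMap A B c + algebraMap A B (0 : A) * π = algebraMap A B c := by
        simp
      rw [hsimp] at hs
      have hcx : h (algebraMap A B c • x) (algebraMap A B c • x)
          = algebraMap A B (2 ^ m * (c ^ 2 * ax + 2 * s)) := by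
        have : h (algebraMap A B c • x) (algebraMap A B c • x)
            = algebraMap A B (c ^ 2) * h x x + algebraMap A B (2 ^ (m + 1) * s) := by
          rw [← hs]; ring
        rw [this, hax, ← map_mul, ← map_add]
        congr 1
        ring
      rw [qspec _ (hAi_smul _ x hx) _ hcx, qspec x hx _ hax]
      rw [hresshift (c ^ 2 * ax) s, map_mul, map_pow]
    · -- kernel
      intro x hx
      obtain ⟨ax, hax⟩ := part1 x hx
      rw [qspec x hx _ hax]
      constructor
      · intro h0
        have : ax ∈ IsLocalRing.maximalIdeal A := Ideal.Quotient.eq_zero_iff_mem.mp h0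
        rw [hmax, Ideal.mem_span_singleton] at this
        obtain ⟨a', ha'⟩ := this
        refine ⟨hx, a', ?_⟩
        rw [hax, ha']
        congr 1
        ring
      · rintro ⟨-, a', ha'⟩
        have : ax = 2 * a' := by
          apply hauniq
          rw [← hax, ha']
          congr 1
          ring
        rw [this]
        rw [show (2 : A) * a' = 0 + 2 * a' by ring, hresshift, map_zero]
  · -- π • x ∈ B_i
    intro x hx
    refine ⟨hAi_smul π x hx, ?_⟩
    obtain ⟨a, ha⟩ := part1 x hx
    refine ⟨-(δ * a), ?_⟩
    rw [hsmul, hσπ, ha]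
    rw [show -π * π = -(π ^ 2) by ring, hπ, ← map_neg, ← map_mul]
    congr 1
    ring
  · -- B_i closed under addition
    rintro x ⟨hx, ax, hax⟩ y ⟨hy, ay, hay⟩
    refine ⟨hAi_add x y hx hy, ?_⟩
    obtain ⟨s, hs⟩ := part2 x hx y hy
    refine ⟨ax + ay + s, ?_⟩
    have : h (x + y) (x + y) = h x x + h y y + algebraMap A B (2 ^ (m + 1) * s) := by
      rw [← hs]; ring
    rw [this, hax, hay, ← map_add, ← map_add]
    congr 1
    ring
  · -- B_i closed under B-scalars
    rintro b x ⟨hx, ax, hax⟩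
    refine ⟨hAi_smul b x hx, ?_⟩
    obtain ⟨⟨b0, b1⟩, hb, -⟩ := hBfree b
    simp only at hb
    refine ⟨(b0 ^ 2 - 2 * δ * b1 ^ 2) * ax, ?_⟩
    rw [hb, hsmul, hnorm, hax, ← map_mul]
    congr 1
    ring
end

section
/- Let i = 2m ≥ 0 be even and let g be an isometry of the hermitian B-lattice (L,h). Then for every w ∈ W_i one has gw − w ∈ X_i ∩ Z_i; that is, g induces the identity on W_i/(X_i ∩ Z_i). -/
/-- `X_i = {x ∈ A_i : h(x,A_i) ⊆ π^{i+1} B}`. -/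
def XiSet {B L : Type*} [CommRing B] [AddCommGroup L] [Module B L]
    (π : B) (h : L → L → B) (i : ℕ) : Set L :=
  {x | x ∈ AiSet π h i ∧ ∀ w ∈ AiSet π h i, π ^ (i + 1) ∣ h x w}

/-- `Y_i = {x ∈ B_i : h(x,B_i) ⊆ π^{i+1} B}`. -/
def YiSet (A : Type*) {B L : Type*} [CommRing A] [CommRing B] [Algebra A B]
    [AddCommGroup L] [Module B L] (π : B) (h : L → L → B) (i : ℕ) : Set L :=
  {x | x ∈ BiSet A π h i ∧ ∀ w ∈ BiSet A π h i, π ^ (i + 1) ∣ h x w}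

/-- `Z_i = {x ∈ Y_i : h(x,x) ∈ 2^{m+2} A}` (used for `i = 2m` even). -/
def ZiSet (A : Type*) {B L : Type*} [CommRing A] [CommRing B] [Algebra A B]
    [AddCommGroup L] [Module B L] (π : B) (h : L → L → B) (i : ℕ) : Set L :=
  {x | x ∈ YiSet A π h i ∧ ∃ a : A, h x x = algebraMap A B (2 ^ ((i + 1) / 2 + 2) * a)}

/-- `S_i = {w ∈ A_i : (ξ^{-m} h(v,w))² - ξ^{-m} h(v,v) ∈ πB for all v ∈ A_i}` for `i = 2m`
even, expressed integrally after multiplying through by the unit multiple `ξ^{2m}` of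
`π^{4m}`: namely `h(v,w)² - ξ^m h(v,v) ∈ π^{4m+1} B`, where `ξ = πσ(π) = -π²`. -/
def SiSet {B L : Type*} [CommRing B] [AddCommGroup L] [Module B L]
    (π : B) (h : L → L → B) (i : ℕ) : Set L :=
  {w | w ∈ AiSet π h i ∧ ∀ v ∈ AiSet π h i,
    π ^ (4 * ((i + 1) / 2) + 1) ∣ ((h v w) ^ 2 - (-(π ^ 2)) ^ ((i + 1) / 2) * h v v)}

/-- `W_i = X_i + ⟨S_i⟩` for even `i`, and `W_i = X_i` for odd `i`. -/
def WiSet {B L : Type*} [CommRing B] [AddCommGroup L] [Module B L]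
    (π : B) (h : L → L → B) (i : ℕ) : Set L :=
  if Even i then (Submodule.span B (XiSet π h i ∪ SiSet π h i) : Set L)
  else XiSet π h i


/-- for even `i = 2m`, every isometry `g` of `(L,h)` induces the identity on
`W_i/(X_i ∩ Z_i)`, i.e. `gw - w ∈ X_i ∩ Z_i` for every `w ∈ W_i`. -/
theorem isometry_identity_on_Wi
    {A : Type*} [CommRing A] [IsDomain A] [IsDiscreteValuationRing A] [CharZero A]
    (hmax : IsLocalRing.maximalIdeal A = Ideal.span {2})
    [IsAdicComplete (IsLocalRing.maximalIdeal A) A]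
    [CharP (IsLocalRing.ResidueField A) 2]
    [PerfectRing (IsLocalRing.ResidueField A) 2]
    (δ : A) (hδunit : IsUnit δ) (hδ1 : (2 : A) ∣ (δ - 1))
    {B : Type*} [CommRing B] [IsDomain B] [Algebra A B]
    (π : B) (hπ : π ^ 2 = algebraMap A B (2 * δ))
    (σ : B ≃ₐ[A] B) (hσπ : σ π = -π) (hσinv : ∀ b : B, σ (σ b) = b)
    (hBfree : ∀ b : B, ∃! p : A × A, b = algebraMap A B p.1 + algebraMap A B p.2 * π)
    {L : Type*} [AddCommGroup L] [Module B L] [Module.Free B L] [Module.Finite B L]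
    (h : L → L → B)
    (hadd : ∀ x y z : L, h (x + y) z = h x z + h y z)
    (hsmul : ∀ (a b : B) (v w : L), h (a • v) (b • w) = σ a * b * h v w)
    (hsymm : ∀ v w : L, h w v = σ (h v w))
    (hnd : ∀ v : L, (∀ w : L, h v w = 0) → v = 0)
    (i : ℕ) (hi : Even i)
    (g : L ≃ₗ[B] L) (hg : ∀ x y : L, h (g x) (g y) = h x y) :
    ∀ w ∈ WiSet π h i, g w - w ∈ XiSet π h i ∩ ZiSet A π h i := by
  
  obtain ⟨m, hm⟩ := hi
  subst hm
  have hidx : (m + m + 1) / 2 = m := by omega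
  set aM := algebraMap A B with haM
  have huniq : ∀ α β α' β' : A, aM α + aM β * π = aM α' + aM β' * π → α = α' ∧ β = β' := by
    intro α β α' β' hE
    obtain ⟨p, -, hup⟩ := hBfree (aM α + aM β * π)
    have h1 := hup (α, β) rfl
    have h2 := hup (α', β') hE
    have h3 := h1.trans h2.symm
    exact ⟨congrArg Prod.fst h3, congrArg Prod.snd h3⟩
  have injA : Function.Injective aM := by
    intro a a' haa
    have : aM a + aM 0 * π = aM a' + aM 0 * π := by rw [haa]
    exact (huniq a 0 a' 0 this).1
  have h2A0 : (2 : A) ≠ 0 := by norm_num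
  have h2δ0 : (2 * δ : A) ≠ 0 := mul_ne_zero h2A0 hδunit.ne_zero
  have hπne : π ≠ 0 := by
    intro h0
    apply h2δ0
    apply injA
    rw [map_zero, ← hπ, h0]
    norm_num
  have h2B : (2 : B) = aM 2 := by rw [haM]; exact (map_ofNat _ 2).symm
  have hπ' : π ^ 2 = aM 2 * aM δ := by rw [hπ, map_mul]
  obtain ⟨u, hu⟩ := hδunit
  obtain ⟨δ', hδ'⟩ : ∃ δ' : A, δ * δ' = 1 := ⟨↑u⁻¹, by rw [← hu]; exact_mod_cast u.mul_inv⟩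
  have h2eq : (2 : B) = π * (π * aM δ') := by
    rw [h2B]
    have h2' : (2 : A) = 2 * δ * δ' := by rw [mul_assoc, hδ', mul_one]
    rw [h2', map_mul, ← hπ]
    ring
  have h2prime : Prime (2 : A) := by
    have hp : (Ideal.span {(2 : A)}).IsPrime := by
      rw [← hmax]; exact (IsLocalRing.maximalIdeal.isMaximal A).isPrime
    exact (Ideal.span_singleton_prime h2A0).mp hp
  have h2Bne : (2 : B) ≠ 0 := by
    rw [h2B]
    intro hh
    exact h2A0 (injA (by rw [hh, map_zero]))
  have hσaM : ∀ a : A, σ (aM a) = aM a := fun a => σ.commutes a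
  -- square root lemma
  have hsqrt : ∀ d : B, π ∣ d ^ 2 → π ∣ d := by
    intro d hd
    obtain ⟨⟨α, β⟩, hab, -⟩ := hBfree d
    obtain ⟨e, he⟩ := hd
    obtain ⟨⟨γ, ε⟩, hge, -⟩ := hBfree e
    have hd2 : d ^ 2 = aM (α * α + 2 * δ * (β * β)) + aM (2 * (α * β)) * π := by
      rw [hab]
      simp only [map_add, map_mul]
      linear_combination (aM β * aM β) * hπ' + (aM α * aM β * π) * h2B
    have hπe : π * e = aM (2 * δ * ε) + aM γ * π := by
      rw [hge]
      simp only [map_mul]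
      linear_combination (aM ε) * hπ'
    have hkey : α * α + 2 * δ * (β * β) = 2 * δ * ε ∧ 2 * (α * β) = γ :=
      huniq _ _ _ _ (by rw [← hd2, he, hπe])
    have hα2 : (2 : A) ∣ α * α := ⟨δ * ε - δ * (β * β), by linear_combination hkey.1⟩
    have hα : (2 : A) ∣ α :=
      h2prime.dvd_of_dvd_pow (n := 2) (by rw [pow_two]; exact hα2)
    obtain ⟨α₁, hα₁⟩ := hα
    refine ⟨π * aM δ' * aM α₁ + aM β, ?_⟩
    rw [hab, hα₁, map_mul, ← h2B, h2eq]
    ring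
  -- trace lemma
  have htr : ∀ c : B, π ^ (m + m + 1) ∣ c → ∃ a : A, c + σ c = aM (2 ^ (m + 2) * a) := by
    intro c hc
    obtain ⟨e, he⟩ := hc
    obtain ⟨⟨α, β⟩, hab, -⟩ := hBfree e
    have hcform : c = aM ((2 * δ) ^ (m + 1) * β) + aM ((2 * δ) ^ m * α) * π := by
      rw [he, hab]
      simp only [map_mul, map_pow]
      have h1 : π ^ (m + m + 1) = (aM 2 * aM δ) ^ m * π := by
        have hmm : m + m + 1 = 2 * m + 1 := by omega
        rw [hmm, pow_succ, pow_mul, hπ']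
      rw [h1]
      linear_combination ((aM 2 * aM δ) ^ m * aM β) * hπ'
    have hσc : σ c = aM ((2 * δ) ^ (m + 1) * β) - aM ((2 * δ) ^ m * α) * π := by
      rw [hcform]
      simp only [map_add, map_mul, map_pow, hσaM, hσπ]
      ring
    refine ⟨δ ^ (m + 1) * β, ?_⟩
    rw [hσc, hcform]
    have hfold : aM ((2 * δ) ^ (m + 1) * β) + aM ((2 * δ) ^ (m + 1) * β)
        = aM (2 ^ (m + 2) * (δ ^ (m + 1) * β)) := by
      rw [← map_add]
      congr 1
      rw [mul_pow]
      ring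
    linear_combination hfold
  -- cancellation lemma
  have hcancel : ∀ c : B, π ^ (m + m) ∣ c → π ^ (4 * m + 1) ∣ c ^ 2 → π ^ (m + m + 1) ∣ c := by
    intro c hc1 hc2
    obtain ⟨d, hd⟩ := hc1
    obtain ⟨e, he⟩ := hc2
    have hne : π ^ (m + m) * π ^ (m + m) ≠ 0 :=
      mul_ne_zero (pow_ne_zero _ hπne) (pow_ne_zero _ hπne)
    have hd2 : d ^ 2 = π * e := by
      apply mul_left_cancel₀ hne
      calc π ^ (m + m) * π ^ (m + m) * d ^ 2 = (π ^ (m + m) * d) ^ 2 := by ring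
        _ = c ^ 2 := by rw [← hd]
        _ = π ^ (4 * m + 1) * e := he
        _ = π ^ (m + m) * π ^ (m + m) * (π * e) := by
            have h41 : 4 * m + 1 = m + m + (m + m) + 1 := by omega
            rw [h41, pow_add, pow_add, pow_one]
            ring
    obtain ⟨f, hf⟩ := hsqrt d ⟨e, hd2⟩
    exact ⟨f, by rw [hd, hf, pow_succ]; ring⟩
  have hσdvd : ∀ (k : ℕ) (c : B), π ^ k ∣ c → π ^ k ∣ σ c := by
    rintro k c ⟨e, he⟩
    refine ⟨(-1) ^ k * σ e, ?_⟩
    rw [he, map_mul, map_pow, hσπ, neg_pow]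
    ring
  -- bilinearity basics
  have h0l : ∀ v : L, h 0 v = 0 := by
    intro v
    have h1 := hadd 0 0 v
    rw [add_zero] at h1
    exact (left_eq_add.mp h1)
  have hsubl : ∀ x y v : L, h (x - y) v = h x v - h y v := by
    intro x y v
    have h1 := hadd (x - y) y v
    rw [sub_add_cancel] at h1
    linear_combination -h1
  have hsubr : ∀ v x y : L, h v (x - y) = h v x - h v y := by
    intro v x y
    calc h v (x - y) = σ (h (x - y) v) := hsymm _ _
      _ = σ (h x v) - σ (h y v) := by rw [hsubl, map_sub]
      _ = h v x - h v y := by rw [← hsymm, ← hsymm]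
  have haddr : ∀ v x y : L, h v (x + y) = h v x + h v y := by
    intro v x y
    calc h v (x + y) = σ (h (x + y) v) := hsymm _ _
      _ = σ (h x v) + σ (h y v) := by rw [hadd, map_add]
      _ = h v x + h v y := by rw [← hsymm, ← hsymm]
  -- isometry transfer
  have hgsymm1 : ∀ x v : L, h (g x) v = h x (g.symm v) := by
    intro x v
    conv_lhs => rw [← g.apply_symm_apply v]
    exact hg x (g.symm v)
  have hgsymm2 : ∀ x v : L, h x (g v) = h (g.symm x) v := by
    intro x v
    conv_lhs => rw [← g.apply_symm_apply x]
    exact hg (g.symm x) v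
  have hAdvd2 : ∀ x ∈ AiSet π h (m + m), ∀ v : L, π ^ (m + m) ∣ h v x := by
    intro x hx v
    rw [hsymm x v]
    exact hσdvd _ _ (hx v)
  have hAg : ∀ x ∈ AiSet π h (m + m), g x ∈ AiSet π h (m + m) := by
    intro x hx v
    rw [hgsymm1]
    exact hx _
  have hAgs : ∀ x ∈ AiSet π h (m + m), g.symm x ∈ AiSet π h (m + m) := by
    intro x hx v
    rw [← hgsymm2]
    exact hx _
  -- difference of two S-elements lies in X
  have hSX : ∀ w ∈ SiSet π h (m + m), ∀ w' ∈ SiSet π h (m + m),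
      w - w' ∈ XiSet π h (m + m) := by
    rintro w ⟨hwA, hwS⟩ w' ⟨hw'A, hw'S⟩
    have hsubA : w - w' ∈ AiSet π h (m + m) := by
      intro v
      rw [hsubl]
      exact dvd_sub (hwA v) (hw'A v)
    refine ⟨hsubA, fun v hv => ?_⟩
    have ha := hwS v hv
    have hb := hw'S v hv
    simp only [hidx] at ha hb
    have hab : π ^ (4 * m + 1) ∣ h v w ^ 2 - h v w' ^ 2 := by
      have h3 := dvd_sub ha hb
      have he2 : h v w ^ 2 - h v w' ^ 2 =
          (h v w ^ 2 - (-(π ^ 2)) ^ m * h v v) - (h v w' ^ 2 - (-(π ^ 2)) ^ m * h v v) := by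
        ring
      rw [he2]
      exact h3
    have hπa : π ^ (m + m) ∣ h v w := hAdvd2 w hwA v
    have hπb : π ^ (m + m) ∣ h v w' := hAdvd2 w' hw'A v
    have hπab : π ^ (m + m) ∣ h v w - h v w' := dvd_sub hπa hπb
    have h2ab : π ^ (4 * m + 1) ∣ (2 : B) * h v w' * (h v w - h v w') := by
      obtain ⟨b₁, hb₁⟩ := hπb
      obtain ⟨c₁, hc₁⟩ := hπab
      refine ⟨aM δ' * b₁ * c₁ * π, ?_⟩
      rw [h2eq, hc₁, hb₁]
      have h41 : 4 * m + 1 = m + m + (m + m) + 1 := by omega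
      rw [h41, pow_add, pow_add, pow_one]
      ring
    have hsq : π ^ (4 * m + 1) ∣ (h v w - h v w') ^ 2 := by
      have he2 : (h v w - h v w') ^ 2 =
          (h v w ^ 2 - h v w' ^ 2) - (2 : B) * h v w' * (h v w - h v w') := by ring
      rw [he2]
      exact dvd_sub hab h2ab
    have key : π ^ (m + m + 1) ∣ h v (w - w') := by
      rw [hsubr]
      exact hcancel _ hπab hsq
    rw [hsymm v (w - w')]
    exact hσdvd _ _ key
  -- g preserves S
  have hgS : ∀ w ∈ SiSet π h (m + m), g w ∈ SiSet π h (m + m) := by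
    rintro w ⟨hwA, hwS⟩
    refine ⟨hAg w hwA, fun v hv => ?_⟩
    have h1 : h v (g w) = h (g.symm v) w := hgsymm2 v w
    have h2 : h v v = h (g.symm v) (g.symm v) := by
      have h3 := hg (g.symm v) (g.symm v)
      rw [g.apply_symm_apply] at h3
      exact h3
    rw [h1, h2]
    exact hwS _ (hAgs v hv)
  -- X facts
  have hXsub : ∀ u₁ ∈ XiSet π h (m + m), ∀ u₂ ∈ XiSet π h (m + m),
      u₁ - u₂ ∈ XiSet π h (m + m) := by
    rintro u₁ ⟨hA1, hX1⟩ u₂ ⟨hA2, hX2⟩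
    refine ⟨fun v => ?_, fun v hv => ?_⟩
    · rw [hsubl]; exact dvd_sub (hA1 v) (hA2 v)
    · rw [hsubl]; exact dvd_sub (hX1 v hv) (hX2 v hv)
  have hgX : ∀ w ∈ XiSet π h (m + m), g w ∈ XiSet π h (m + m) := by
    rintro w ⟨hwA, hwX⟩
    refine ⟨hAg w hwA, fun v hv => ?_⟩
    rw [hgsymm1]
    exact hwX _ (hAgs v hv)
  -- the Z-part
  have hZpart : ∀ w ∈ AiSet π h (m + m), g w - w ∈ XiSet π h (m + m) →
      ∃ a : A, h (g w - w) (g w - w) = aM (2 ^ (m + 2) * a) := by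
    intro w hwA hu
    have hc : π ^ (m + m + 1) ∣ h w (g w - w) := by
      rw [hsymm (g w - w) w]
      exact hσdvd _ _ (hu.2 w hwA)
    have hσww : σ (h w w) = h w w := (hsymm w w).symm
    have hmain2 : h (g w - w) (g w - w) = -(h w (g w - w) + σ (h w (g w - w))) := by
      rw [hsubl, hsubr, hsubr, hg w w, hsymm w (g w), map_sub, hσww]
      ring
    obtain ⟨a, ha⟩ := htr _ hc
    exact ⟨-a, by rw [hmain2, ha, mul_neg, map_neg]⟩
  -- closure properties of the predicate
  have hPadd : ∀ u₁ u₂ : L,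
      (u₁ ∈ XiSet π h (m + m) ∧ ∃ a : A, h u₁ u₁ = aM (2 ^ (m + 2) * a)) →
      (u₂ ∈ XiSet π h (m + m) ∧ ∃ a : A, h u₂ u₂ = aM (2 ^ (m + 2) * a)) →
      ((u₁ + u₂) ∈ XiSet π h (m + m) ∧
        ∃ a : A, h (u₁ + u₂) (u₁ + u₂) = aM (2 ^ (m + 2) * a)) := by
    rintro u₁ u₂ ⟨⟨hA1, hX1⟩, a1, ha1⟩ ⟨⟨hA2, hX2⟩, a2, ha2⟩
    refine ⟨⟨fun v => ?_, fun v hv => ?_⟩, ?_⟩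
    · rw [hadd]; exact dvd_add (hA1 v) (hA2 v)
    · rw [hadd]; exact dvd_add (hX1 v hv) (hX2 v hv)
    · obtain ⟨t, ht⟩ := htr (h u₁ u₂) (hX1 u₂ hA2)
      refine ⟨a1 + a2 + t, ?_⟩
      have hexp : h (u₁ + u₂) (u₁ + u₂) = h u₁ u₁ + h u₂ u₂ + (h u₁ u₂ + σ (h u₁ u₂)) := by
        rw [hadd, haddr, haddr, hsymm u₁ u₂]
        ring
      rw [hexp, ha1, ha2, ht, ← map_add, ← map_add]
      congr 1
      ring
  have hPsmul : ∀ (b : B) (u : L),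
      (u ∈ XiSet π h (m + m) ∧ ∃ a : A, h u u = aM (2 ^ (m + 2) * a)) →
      (b • u ∈ XiSet π h (m + m) ∧ ∃ a : A, h (b • u) (b • u) = aM (2 ^ (m + 2) * a)) := by
    rintro b w ⟨⟨hA, hX⟩, a, ha⟩
    have hsm : ∀ v : L, h (b • w) v = σ b * h w v := by
      intro v
      have h1 := hsmul b 1 w v
      rwa [one_smul, mul_one] at h1
    refine ⟨⟨fun v => ?_, fun v hv => ?_⟩, ?_⟩
    · rw [hsm]; exact Dvd.dvd.mul_left (hA v) _
    · rw [hsm]; exact Dvd.dvd.mul_left (hX v hv) _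
    · obtain ⟨⟨α, β⟩, hb, -⟩ := hBfree b
      have hσb : σ b = aM α - aM β * π := by
        rw [hb, map_add, map_mul, hσaM, hσaM, hσπ]
        ring
      have hnormb : σ b * b = aM (α * α - 2 * δ * (β * β)) := by
        rw [hσb, hb]
        simp only [map_sub, map_mul]
        linear_combination (-(aM β * aM β)) * hπ'
      refine ⟨(α * α - 2 * δ * (β * β)) * a, ?_⟩
      rw [hsmul b b w w, hnormb, ha, ← map_mul]
      congr 1
      ring
  have hP0 : (0 : L) ∈ XiSet π h (m + m) ∧ ∃ a : A, h 0 0 = aM (2 ^ (m + 2) * a) :=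
    ⟨⟨fun v => by rw [h0l]; exact dvd_zero _, fun v _ => by rw [h0l]; exact dvd_zero _⟩,
      ⟨0, by rw [h0l, mul_zero, map_zero]⟩⟩
  -- main argument
  intro w hw
  have hweven : Even (m + m) := ⟨m, rfl⟩
  unfold WiSet at hw
  rw [if_pos hweven] at hw
  have hw' : w ∈ Submodule.span B (XiSet π h (m + m) ∪ SiSet π h (m + m)) := hw
  have hmain : (g w - w) ∈ XiSet π h (m + m) ∧
      ∃ a : A, h (g w - w) (g w - w) = aM (2 ^ (m + 2) * a) := by
    refine Submodule.span_induction
      (p := fun x _ => (g x - x) ∈ XiSet π h (m + m) ∧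
        ∃ a : A, h (g x - x) (g x - x) = aM (2 ^ (m + 2) * a)) ?_ ?_ ?_ ?_ hw'
    · rintro x (hx | hx)
      · have hXd : g x - x ∈ XiSet π h (m + m) := hXsub _ (hgX x hx) _ hx
        exact ⟨hXd, hZpart x hx.1 hXd⟩
      · have hXd : g x - x ∈ XiSet π h (m + m) := hSX _ (hgS x hx) _ hx
        exact ⟨hXd, hZpart x hx.1 hXd⟩
    · simpa using hP0
    · intro x y hx hy hpx hpy
      have he : g (x + y) - (x + y) = (g x - x) + (g y - y) := by
        rw [map_add]; abel
      rw [he]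
      exact hPadd _ _ hpx hpy
    · intro b x hx hpx
      have he : g (b • x) - b • x = b • (g x - x) := by
        rw [map_smul, smul_sub]
      rw [he]
      exact hPsmul b _ hpx
  obtain ⟨hXmem, a, ha⟩ := hmain
  have hBmem : g w - w ∈ BiSet A π h (m + m) := by
    refine ⟨hXmem.1, ⟨2 * a, ?_⟩⟩
    rw [ha, hidx]
    congr 1
    ring
  have hYmem : g w - w ∈ YiSet A π h (m + m) :=
    ⟨hBmem, fun v hv => hXmem.2 v hv.1⟩
  have hZmem : g w - w ∈ ZiSet A π h (m + m) := by
    refine ⟨hYmem, ⟨a, ?_⟩⟩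
    rw [hidx]
    exact ha
  exact ⟨hXmem, hZmem⟩
end

section
/- Let i = 2m ≥ 0 be even. Let f : L × L → B be another hermitian form on L (f(av,bw) = σ(a)b·f(v,w), f(w,v) = σ(f(v,w))) satisfying: f(x,w) − h(x,w) ∈ π^{i+1}B for all x ∈ A_i and w ∈ W_i, and f(w,w) − h(w,w) ∈ 2^{m+2}A for all w ∈ W_i. Let g : L → L be a B-linear map with g(W_i) ⊆ W_i and gw − w ∈ X_i ∩ Z_i for all w ∈ W_i. Then f(gw, gw) − h(w,w) ∈ 2^{m+2}A for every w ∈ W_i; that is, the form f ∘ g again satisfies the congruence condition (d) defining the scheme H. -/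
/-- for even `i = 2m`, if a hermitian form `f` satisfies the congruences
`f(x,w) ≡ h(x,w) mod π^{i+1}` on `A_i × W_i` and `f(w,w) ≡ h(w,w) mod 2^{m+2}A` on `W_i`,
and `g` is a `B`-linear map with `g(W_i) ⊆ W_i` inducing the identity on `W_i/(X_i ∩ Z_i)`,
then `f ∘ g` again satisfies `f(gw,gw) ≡ h(w,w) mod 2^{m+2}A` on `W_i`. -/
theorem condition_d_stable_under_action
    {A : Type*} [CommRing A] [IsDomain A] [IsDiscreteValuationRing A] [CharZero A]
    (hmax : IsLocalRing.maximalIdeal A = Ideal.span {2})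
    [IsAdicComplete (IsLocalRing.maximalIdeal A) A]
    [CharP (IsLocalRing.ResidueField A) 2]
    [PerfectRing (IsLocalRing.ResidueField A) 2]
    (δ : A) (hδunit : IsUnit δ) (hδ1 : (2 : A) ∣ (δ - 1))
    {B : Type*} [CommRing B] [IsDomain B] [Algebra A B]
    (π : B) (hπ : π ^ 2 = algebraMap A B (2 * δ))
    (σ : B ≃ₐ[A] B) (hσπ : σ π = -π) (hσinv : ∀ b : B, σ (σ b) = b)
    (hBfree : ∀ b : B, ∃! p : A × A, b = algebraMap A B p.1 + algebraMap A B p.2 * π)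
    {L : Type*} [AddCommGroup L] [Module B L] [Module.Free B L] [Module.Finite B L]
    (h : L → L → B)
    (hadd : ∀ x y z : L, h (x + y) z = h x z + h y z)
    (hsmul : ∀ (a b : B) (v w : L), h (a • v) (b • w) = σ a * b * h v w)
    (hsymm : ∀ v w : L, h w v = σ (h v w))
    (hnd : ∀ v : L, (∀ w : L, h v w = 0) → v = 0)
    (i : ℕ) (hi : Even i)
    (f : L → L → B)
    (fadd : ∀ x y z : L, f (x + y) z = f x z + f y z)
    (fsmul : ∀ (a b : B) (v w : L), f (a • v) (b • w) = σ a * b * f v w)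
    (fsymm : ∀ v w : L, f w v = σ (f v w))
    (hfc : ∀ x ∈ AiSet π h i, ∀ w ∈ WiSet π h i, π ^ (i + 1) ∣ (f x w - h x w))
    (hfd : ∀ w ∈ WiSet π h i, ∃ a : A,
        f w w - h w w = algebraMap A B (2 ^ ((i + 1) / 2 + 2) * a))
    (g : L →ₗ[B] L)
    (hgW : ∀ w ∈ WiSet π h i, g w ∈ WiSet π h i)
    (hgid : ∀ w ∈ WiSet π h i, g w - w ∈ XiSet π h i ∩ ZiSet A π h i) :
    ∀ w ∈ WiSet π h i, ∃ a : A,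
      f (g w) (g w) - h w w = algebraMap A B (2 ^ ((i + 1) / 2 + 2) * a) := by
  classical
  obtain ⟨m, hm⟩ := hi
  have hieven : Even i := ⟨m, hm⟩
  have hm2 : (i + 1) / 2 = m := by omega
  have hspan : WiSet π h i
      = (Submodule.span B (XiSet π h i ∪ SiSet π h i) : Set L) := by
    simp only [WiSet, if_pos hieven]
  -- h vanishes at 0 in the first slot
  have h0 : ∀ w : L, h 0 w = 0 := by
    intro w
    have h1 := hadd 0 0 w
    rw [add_zero] at h1
    exact left_eq_add.mp h1
  -- A_i is a B-submodule
  have hAadd : ∀ x y : L, x ∈ AiSet π h i → y ∈ AiSet π h i →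
      x + y ∈ AiSet π h i := by
    intro x y hx hy w
    rw [hadd]
    exact dvd_add (hx w) (hy w)
  have hAsmul : ∀ (a : B) (x : L), x ∈ AiSet π h i → a • x ∈ AiSet π h i := by
    intro a x hx w
    have : h (a • x) ((1 : B) • w) = σ a * 1 * h x w := hsmul a 1 x w
    rw [one_smul, mul_one] at this
    rw [this]
    exact Dvd.dvd.mul_left (hx w) (σ a)
  have hWA : ∀ x ∈ WiSet π h i, x ∈ AiSet π h i := by
    intro x hx
    rw [hspan] at hx
    refine Submodule.span_induction (p := fun x _ => x ∈ AiSet π h i)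
      ?_ ?_ ?_ ?_ hx
    · rintro y (hy | hy)
      · exact hy.1
      · exact hy.1
    · intro w; rw [h0]; exact dvd_zero _
    · intro a b _ _ ha hb; exact hAadd a b ha hb
    · intro a b _ hb; exact hAsmul a b hb
  -- f additive in second argument
  have fadd2 : ∀ x y z : L, f x (y + z) = f x y + f x z := by
    intro x y z
    rw [fsymm (y + z) x, fadd, map_add, ← fsymm y x, ← fsymm z x]
  intro w hw
  set z := g w - w with hz
  have hzXZ := hgid w hw
  have hzX : z ∈ XiSet π h i := hzXZ.1
  have hzZ : z ∈ ZiSet A π h i := hzXZ.2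
  have hzW : z ∈ WiSet π h i := by
    rw [hspan]
    have h1 : g w ∈ Submodule.span B (XiSet π h i ∪ SiSet π h i) := by
      have := hgW w hw; rwa [hspan] at this
    have h2 : w ∈ Submodule.span B (XiSet π h i ∪ SiSet π h i) := by
      have h2' := hw; rw [hspan] at h2'; exact h2'
    exact Submodule.sub_mem _ h1 h2
  have hgwz : g w = w + z := by rw [hz]; abel
  -- piece 1 : f w w - h w w
  obtain ⟨a₁, ha₁⟩ := hfd w hw
  -- piece 2 : f z z - h z z
  obtain ⟨a₂, ha₂⟩ := hfd z hzW
  -- piece 3 : h z z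
  obtain ⟨a₃, ha₃⟩ := hzZ.2
  -- piece 4 : the trace term f z w + f w z
  have hdvd1 : π ^ (i + 1) ∣ (f z w - h z w) := hfc z hzX.1 w hw
  have hdvd2 : π ^ (i + 1) ∣ h z w := hzX.2 w (hWA w hw)
  have hdvd : π ^ (i + 1) ∣ f z w := by
    have := dvd_add hdvd1 hdvd2
    rwa [sub_add_cancel] at this
  obtain ⟨c, hc⟩ := hdvd
  obtain ⟨⟨α, β⟩, hcab, -⟩ := hBfree c
  have hσc : σ c = algebraMap A B α - algebraMap A B β * π := by
    rw [hcab, map_add, map_mul, AlgEquiv.commutes, AlgEquiv.commutes, hσπ]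
    ring
  have hodd : Odd (i + 1) := ⟨m, by omega⟩
  have hT : f z w + f w z
      = algebraMap A B (2 ^ (m + 2) * (δ ^ (m + 1) * β)) := by
    rw [fsymm z w, hc, map_mul, map_pow, hσπ, hodd.neg_pow, hσc, hcab]
    have hπi2 : π ^ (i + 2) = algebraMap A B ((2 * δ) ^ (m + 1)) := by
      rw [show i + 2 = 2 * (m + 1) by omega, pow_mul, hπ, ← map_pow]
    have key : π ^ (i + 1) * (algebraMap A B α + algebraMap A B β * π) +
        -π ^ (i + 1) * (algebraMap A B α - algebraMap A B β * π)
        = 2 * algebraMap A B β * π ^ (i + 2) := by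
      ring
    rw [key, hπi2]
    have h2 : (2 : B) = algebraMap A B 2 := by
      rw [map_ofNat]
    rw [h2, ← map_mul, ← map_mul]
    congr 1
    ring
  -- assemble
  have key : f (g w) (g w) - h w w
      = (f w w - h w w) + (f z w + f w z) + ((f z z - h z z) + h z z) := by
    rw [hgwz, fadd, fadd2, fadd2]
    ring
  refine ⟨a₁ + δ ^ (m + 1) * β + a₂ + a₃, ?_⟩
  rw [key, ha₁, ha₂, ha₃, hT, hm2, ← map_add, ← map_add, ← map_add]
  congr 1
  ring
end

section
/- Let i = 2m ≥ 0 be even. Then {x ∈ B_i : h(x,y) + σ(h(x,y)) ∈ 2^{m+2}A for all y ∈ B_i} = Y_i. Consequently Z_i/πB_i is the radical of the κ-valued quadratic form x ↦ 2^{−(m+1)}h(x,x) mod 2 on B_i/πB_i, where in characteristic 2 the radical of a quadratic form consists of the vectors lying in the radical of its polar form on which the quadratic form vanishes. -/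
/-- for even `i = 2m`, the set of `x ∈ B_i` with
`h(x,y) + σ(h(x,y)) ∈ 2^{m+2}A` for all `y ∈ B_i` equals `Y_i`; consequently `Z_i/πB_i` is
the radical of the quadratic form `x ↦ 2^{-(m+1)}h(x,x) mod 2` on `B_i/πB_i` (the vectors in
the radical of its polar form on which the quadratic form vanishes). -/
theorem Yi_is_radical_of_polar
    {A : Type*} [CommRing A] [IsDomain A] [IsDiscreteValuationRing A] [CharZero A]
    (hmax : IsLocalRing.maximalIdeal A = Ideal.span {2})
    [IsAdicComplete (IsLocalRing.maximalIdeal A) A]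
    [CharP (IsLocalRing.ResidueField A) 2]
    [PerfectRing (IsLocalRing.ResidueField A) 2]
    (δ : A) (hδunit : IsUnit δ) (hδ1 : (2 : A) ∣ (δ - 1))
    {B : Type*} [CommRing B] [IsDomain B] [Algebra A B]
    (π : B) (hπ : π ^ 2 = algebraMap A B (2 * δ))
    (σ : B ≃ₐ[A] B) (hσπ : σ π = -π) (hσinv : ∀ b : B, σ (σ b) = b)
    (hBfree : ∀ b : B, ∃! p : A × A, b = algebraMap A B p.1 + algebraMap A B p.2 * π)
    {L : Type*} [AddCommGroup L] [Module B L] [Module.Free B L] [Module.Finite B L]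
    (h : L → L → B)
    (hadd : ∀ x y z : L, h (x + y) z = h x z + h y z)
    (hsmul : ∀ (a b : B) (v w : L), h (a • v) (b • w) = σ a * b * h v w)
    (hsymm : ∀ v w : L, h w v = σ (h v w))
    (hnd : ∀ v : L, (∀ w : L, h v w = 0) → v = 0)
    (i : ℕ) (hi : Even i) :
    {x ∈ BiSet A π h i | ∀ y ∈ BiSet A π h i, ∃ a : A,
        h x y + σ (h x y) = algebraMap A B (2 ^ ((i + 1) / 2 + 2) * a)}
      = YiSet A π h i ∧
    (∀ x ∈ BiSet A π h i,
      (x ∈ ZiSet A π h i ↔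
        ((∀ y ∈ BiSet A π h i, ∃ a : A,
            h (x + y) (x + y) - h x x - h y y = algebraMap A B (2 ^ ((i + 1) / 2 + 2) * a)) ∧
          ∃ a : A, h x x = algebraMap A B (2 ^ ((i + 1) / 2 + 2) * a)))) := by

  obtain ⟨r, hr⟩ := hi
  subst hr
  have hm : (r + r + 1) / 2 = r := by omega
  have hodd : Odd (r + r + 1) := ⟨r, by omega⟩
  set ι := algebraMap A B with hιdef
  have hσι : ∀ a : A, σ (ι a) = ι a := fun a => σ.commutes a
  have hι2 : ι (2 : A) = (2 : B) := map_ofNat ι 2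
  have injι : Function.Injective ι := by
    intro c d hcd
    obtain ⟨p, hp, hup⟩ := hBfree (ι c)
    have h1 := hup (c, 0) (by simp)
    have h2 := hup (d, 0) (by simp [hcd])
    have h3 := h1.trans h2.symm
    simpa using congrArg Prod.fst h3
  obtain ⟨u, hu⟩ : ∃ u : A, δ * u = 1 := hδunit.exists_right_inv
  have hσb : ∀ α β : A, σ (ι α + ι β * π) = ι α - ι β * π := by
    intro α β; rw [map_add, map_mul, hσι, hσι, hσπ]; ring
  -- key1 : divisibility implies the trace condition
  have key1 : ∀ b : B, π ^ (r + r + 1) ∣ b →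
      ∃ a : A, b + σ b = ι (2 ^ (r + 2) * a) := by
    rintro b ⟨c, rfl⟩
    obtain ⟨⟨c0, c1⟩, hc0, -⟩ := hBfree c
    have hc : c = ι c0 + ι c1 * π := hc0
    have hσc : σ c = ι c0 - ι c1 * π := by rw [hc]; exact hσb c0 c1
    refine ⟨δ ^ (r + 1) * c1, ?_⟩
    calc π ^ (r + r + 1) * c + σ (π ^ (r + r + 1) * c)
        = π ^ (r + r + 1) * c + (-(π ^ (r + r + 1))) * σ c := by
          rw [map_mul, map_pow, hσπ, hodd.neg_pow]
      _ = (π ^ 2) ^ (r + 1) * (ι 2 * ι c1) := by rw [hσc, hc, hι2]; ring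
      _ = ι ((2 * δ) ^ (r + 1)) * (ι 2 * ι c1) := by rw [hπ, ← map_pow]
      _ = ι (2 ^ (r + 2) * (δ ^ (r + 1) * c1)) := by
          rw [← map_mul, ← map_mul]
          congr 1
          rw [mul_pow]
          ring
  -- π•y ∈ B_i when y ∈ B_i
  have hπB : ∀ y ∈ BiSet A π h (r + r), π • y ∈ BiSet A π h (r + r) := by
    rintro y ⟨hyA, a, ha⟩
    have hπyw : ∀ w : L, h (π • y) w = -π * h y w := by
      intro w
      have h1 := hsmul π 1 y w
      rw [one_smul, hσπ] at h1
      rw [h1]; ring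
    refine ⟨fun w => ?_, ⟨-(2 * δ * a), ?_⟩⟩
    · rw [hπyw]
      exact (hyA w).mul_left _
    · have h2 := hsmul π π y y
      rw [hσπ] at h2
      simp only [hm] at ha ⊢
      have e : ι (2 ^ (r + 1) * -(2 * δ * a)) = -(π ^ 2 * ι (2 ^ (r + 1) * a)) := by
        rw [hπ, ← map_mul, ← map_neg]
        congr 1
        ring
      rw [h2, ha, e]
      ring
  -- key2 : the trace condition implies divisibility
  have key2 : ∀ x ∈ BiSet A π h (r + r),
      (∀ y ∈ BiSet A π h (r + r), ∃ a : A,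
        h x y + σ (h x y) = ι (2 ^ (r + 2) * a)) →
      ∀ y ∈ BiSet A π h (r + r), π ^ (r + r + 1) ∣ h x y := by
    intro x hx H y hy
    obtain ⟨⟨α, β⟩, hb0, -⟩ := hBfree (h x y)
    have hb : h x y = ι α + ι β * π := hb0
    have hσhxy : σ (h x y) = ι α - ι β * π := by rw [hb]; exact hσb α β
    obtain ⟨a0, ha0⟩ := H y hy
    have e0 : h x y + σ (h x y) = ι (2 * α) := by
      rw [hσhxy, hb, map_mul, hι2]; ring
    have hα : α = 2 ^ (r + 1) * a0 := by
      have e1 : 2 * α = 2 ^ (r + 2) * a0 := injι (e0.symm.trans ha0)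
      have e1' : (2 : A) * α = 2 * (2 ^ (r + 1) * a0) := by linear_combination e1
      exact mul_left_cancel₀ two_ne_zero e1'
    obtain ⟨a1, ha1⟩ := H (π • y) (hπB y hy)
    have hxπy : h x (π • y) = π * h x y := by
      have h1 := hsmul 1 π x y
      rw [one_smul, map_one, one_mul] at h1
      exact h1
    have e2 : h x (π • y) + σ (h x (π • y)) = ι (4 * (δ * β)) := by
      calc h x (π • y) + σ (h x (π • y))
          = π * (ι α + ι β * π) + (-π) * (ι α - ι β * π) := by
            rw [hxπy, map_mul, hσπ, hσhxy, hb]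
        _ = ι 2 * ι β * π ^ 2 := by rw [hι2]; ring
        _ = ι (4 * (δ * β)) := by
            rw [hπ, ← map_mul, ← map_mul]; congr 1; ring
    have hβval : δ * β = 2 ^ r * a1 := by
      have e3 : 4 * (δ * β) = 2 ^ (r + 2) * a1 := injι (e2.symm.trans ha1)
      have e3' : (4 : A) * (δ * β) = 4 * (2 ^ r * a1) := by linear_combination e3
      exact mul_left_cancel₀ (by norm_num) e3'
    have hβ : β = 2 ^ r * (u * a1) := by
      calc β = (δ * u) * β := by rw [hu, one_mul]
        _ = u * (δ * β) := by ring
        _ = 2 ^ r * (u * a1) := by rw [hβval]; ring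
    refine ⟨ι (u ^ (r + 1) * a0) * π + ι (u ^ r * (u * a1)), ?_⟩
    rw [hb, hα, hβ]
    have l1 : π ^ (r + r + 1) * (ι (u ^ (r + 1) * a0) * π) = ι (2 ^ (r + 1) * a0) := by
      have e4 : π ^ (r + r + 1) * (ι (u ^ (r + 1) * a0) * π)
          = (π ^ 2) ^ (r + 1) * ι (u ^ (r + 1) * a0) := by ring
      rw [e4, hπ, ← map_pow, ← map_mul]
      congr 1
      calc (2 * δ) ^ (r + 1) * (u ^ (r + 1) * a0)
          = 2 ^ (r + 1) * a0 * (δ ^ (r + 1) * u ^ (r + 1)) := by rw [mul_pow]; ring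
        _ = 2 ^ (r + 1) * a0 * (δ * u) ^ (r + 1) := by rw [mul_pow]
        _ = 2 ^ (r + 1) * a0 := by rw [hu, one_pow, mul_one]
    have l2 : π ^ (r + r + 1) * ι (u ^ r * (u * a1)) = ι (2 ^ r * (u * a1)) * π := by
      have e5 : π ^ (r + r + 1) * ι (u ^ r * (u * a1))
          = (π ^ 2) ^ r * ι (u ^ r * (u * a1)) * π := by ring
      rw [e5, hπ, ← map_pow, ← map_mul]
      congr 2
      calc (2 * δ) ^ r * (u ^ r * (u * a1))
          = 2 ^ r * (u * a1) * (δ ^ r * u ^ r) := by rw [mul_pow]; ring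
        _ = 2 ^ r * (u * a1) * (δ * u) ^ r := by rw [mul_pow]
        _ = 2 ^ r * (u * a1) := by rw [hu, one_pow, mul_one]
    linear_combination -l1 - l2
  -- part 1
  have part1 : {x ∈ BiSet A π h (r + r) | ∀ y ∈ BiSet A π h (r + r), ∃ a : A,
        h x y + σ (h x y) = ι (2 ^ ((r + r + 1) / 2 + 2) * a)}
      = YiSet A π h (r + r) := by
    ext x
    simp only [Set.mem_setOf_eq, YiSet, hm]
    constructor
    · rintro ⟨hx, H⟩
      exact ⟨hx, fun y hy => key2 x hx H y hy⟩
    · rintro ⟨hx, hY⟩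
      exact ⟨hx, fun y hy => key1 _ (hY y hy)⟩
  refine ⟨part1, ?_⟩
  -- polar identity
  have haddr : ∀ z v w : L, h z (v + w) = h z v + h z w := by
    intro z v w
    calc h z (v + w) = σ (h (v + w) z) := hsymm (v + w) z
      _ = σ (h v z) + σ (h w z) := by rw [hadd, map_add]
      _ = h z v + h z w := by rw [← hsymm v z, ← hsymm w z]
  have hpolar : ∀ v w : L, h (v + w) (v + w) - h v v - h w w = h v w + σ (h v w) := by
    intro v w
    rw [hadd v w (v + w), haddr v v w, haddr w v w, hsymm v w]
    ring
  intro x hx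
  have hiff := Set.ext_iff.mp part1 x
  simp only [Set.mem_setOf_eq, hm] at hiff
  constructor
  · rintro ⟨⟨hxB, hY⟩, a, ha⟩
    refine ⟨fun y hy => ?_, ⟨a, ha⟩⟩
    obtain ⟨a', ha'⟩ := key1 _ (hY y hy)
    exact ⟨a', by rw [hpolar x y]; simpa [hm] using ha'⟩
  · rintro ⟨Hpol, a, ha⟩
    refine ⟨⟨hx, fun y hy => key2 x hx (fun y hy => ?_) y hy⟩, a, ha⟩
    obtain ⟨a', ha'⟩ := Hpol y hy
    exact ⟨a', by rw [← hpolar x y]; simpa [hm] using ha'⟩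
end

section
/- The commutative A-algebra A[X,Y]/(X + X² − 2δ·Y²) is smooth over A, i.e. formally smooth and of finite presentation. (It is the coordinate ring of the smooth integral model of the unitary group attached to the rank-one unimodular hermitian lattice over B = A[π], π² = 2δ.) -/
open MvPolynomial in
/-- Key auxiliary lemma: formal smoothness of the quotient, over any commutative ring. -/
theorem smooth_model_formallySmooth_aux {A : Type*} [CommRing A] (δ : A) :
    Algebra.FormallySmooth A
      (MvPolynomial (Fin 2) A ⧸
        Ideal.span {(X 0 : MvPolynomial (Fin 2) A) + X 0 ^ 2 - C (2 * δ) * X 1 ^ 2}) := by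
  set f₀ : MvPolynomial (Fin 2) A := X 0 + X 0 ^ 2 - C (2 * δ) * X 1 ^ 2 with hf₀
  set I : Ideal (MvPolynomial (Fin 2) A) := Ideal.span {f₀} with hI
  set π : MvPolynomial (Fin 2) A →ₐ[A] (MvPolynomial (Fin 2) A ⧸ I) :=
    Ideal.Quotient.mkₐ A I with hπ
  have hker : RingHom.ker π.toRingHom = I := Ideal.mk_ker
  set J : Ideal (MvPolynomial (Fin 2) A) := RingHom.ker π.toRingHom ^ 2 with hJ
  have hJI : J = Ideal.span {f₀ ^ 2} := by
    rw [hJ, hker, hI, Ideal.span_singleton_pow]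
  set mk2 : MvPolynomial (Fin 2) A →ₐ[A] (MvPolynomial (Fin 2) A ⧸ J) :=
    Ideal.Quotient.mkₐ A J with hmk2
  set w : Fin 2 → MvPolynomial (Fin 2) A :=
    ![X 0 - (1 + 2 * X 0) * f₀, X 1 - 2 * X 1 * f₀] with hw
  have hwI : ∀ i, w i - X i ∈ I := by
    intro i
    rw [hI, Ideal.mem_span_singleton]
    fin_cases i
    · exact ⟨-(1 + 2 * X 0), by
        show (X 0 - (1 + 2 * X 0) * f₀) - X 0 = f₀ * -(1 + 2 * X 0); ring⟩
    · exact ⟨-(2 * X 1), by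
        show (X 1 - 2 * X 1 * f₀) - X 1 = f₀ * -(2 * X 1); ring⟩
  set φ : MvPolynomial (Fin 2) A →ₐ[A] (MvPolynomial (Fin 2) A ⧸ J) :=
    aeval (fun i => mk2 (w i)) with hφdef
  have hφeq : ∀ p, φ p = mk2 (aeval w p) := by
    intro p
    rw [hφdef, ← comp_aeval, AlgHom.coe_comp, Function.comp_apply]
  have hkey : aeval w f₀ = ((1 + 2 * X 0) ^ 2 - C (2 * δ) * (2 * X 1) ^ 2 - 4) * f₀ ^ 2 := by
    simp only [hf₀, hw, map_add, map_sub, map_mul, map_pow, aeval_X, aeval_C,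
      Matrix.cons_val_zero, Matrix.cons_val_one, Matrix.head_cons, algebraMap_eq]
    ring
  have hφf₀ : φ f₀ = 0 := by
    rw [hφeq, hmk2, Ideal.Quotient.mkₐ_eq_mk, Ideal.Quotient.eq_zero_iff_mem, hJI,
      Ideal.mem_span_singleton, hkey]
    exact Dvd.intro_left _ rfl
  have hφI : ∀ p ∈ I, φ p = 0 := by
    intro p hp
    rw [hI, Ideal.mem_span_singleton] at hp
    obtain ⟨c, rfl⟩ := hp
    rw [map_mul, hφf₀, zero_mul]
  set g : (MvPolynomial (Fin 2) A ⧸ I) →ₐ[A] (MvPolynomial (Fin 2) A ⧸ J) :=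
    Ideal.Quotient.liftₐ I φ hφI with hg
  have : Algebra.FormallySmooth A (MvPolynomial (Fin 2) A) :=
    Algebra.FormallySmooth.of_equiv (MvPolynomial.renameEquiv A Equiv.ulift.{0})
  refine Algebra.FormallySmooth.of_split π g ?_
  have hcomp : (π.kerSquareLift.comp g).comp π = (AlgHom.id A _).comp π := by
    apply MvPolynomial.algHom_ext
    intro i
    have h1 : g (π (X i)) = mk2 (w i) := by
      rw [hπ, Ideal.Quotient.mkₐ_eq_mk, hg, Ideal.Quotient.liftₐ_apply]
      show φ (X i) = mk2 (w i)
      exact hφdef ▸ aeval_X _ i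
    simp only [AlgHom.coe_comp, Function.comp_apply, AlgHom.id_apply, h1]
    have h2 : π.kerSquareLift (mk2 (w i)) = π (w i) := rfl
    rw [h2]
    have : π (w i) - π (X i) = 0 := by
      rw [← map_sub, hπ, Ideal.Quotient.mkₐ_eq_mk, Ideal.Quotient.eq_zero_iff_mem]
      exact hwI i
    exact sub_eq_zero.mp this
  apply AlgHom.ext
  intro x
  obtain ⟨p, rfl⟩ := Ideal.Quotient.mk_surjective x
  exact AlgHom.congr_fun hcomp p

open MvPolynomial in
/-- the `A`-algebra `A[X,Y]/(X + X² - 2δY²)` is smooth over `A`,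
i.e. formally smooth and of finite presentation. -/
theorem smooth_model_is_smooth
    {A : Type*} [CommRing A] [IsDomain A] [IsDiscreteValuationRing A] [CharZero A]
    (hmax : IsLocalRing.maximalIdeal A = Ideal.span {2})
    [IsAdicComplete (IsLocalRing.maximalIdeal A) A]
    (δ : A) (hδunit : IsUnit δ) (hδ1 : (2 : A) ∣ (δ - 1)) :
    Algebra.FormallySmooth A
      (MvPolynomial (Fin 2) A ⧸
        Ideal.span {(X 0 : MvPolynomial (Fin 2) A) + X 0 ^ 2 - C (2 * δ) * X 1 ^ 2}) ∧
    Algebra.FinitePresentation A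
      (MvPolynomial (Fin 2) A ⧸
        Ideal.span {(X 0 : MvPolynomial (Fin 2) A) + X 0 ^ 2 - C (2 * δ) * X 1 ^ 2}) := by
  refine ⟨smooth_model_formallySmooth_aux δ, ?_⟩
  exact Algebra.FinitePresentation.quotient (Submodule.fg_span_singleton _)
end

section
/- For every integer N ≥ 1, the number of pairs (x,y) ∈ (A/2^N A) × (A/2^N A) satisfying x + x² = 2δ·y² in A/2^N A equals 2·f^N. -/
open IsLocalRing Polynomial

section Aux

variable {A : Type*} [CommRing A]

lemma aux_unit_one_add (N : ℕ) (t : A ⧸ Ideal.span {(2:A)^N}) :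
    IsUnit (1 + 2 * t) := by
  have h2 : ((2 : A ⧸ Ideal.span {(2:A)^N}))^N = 0 := by
    rw [show ((2 : A ⧸ Ideal.span {(2:A)^N})) = Ideal.Quotient.mk _ (2:A) from
      (map_ofNat _ 2).symm, ← map_pow]
    exact Ideal.Quotient.eq_zero_iff_mem.mpr (Ideal.mem_span_singleton_self _)
  have hs : (-(2*t)) ^ N = 0 := by
    rw [neg_pow, mul_pow, h2]
    simp
  have hg := geom_sum_mul (-(2*t)) N
  exact IsUnit.of_mul_eq_one (∑ i ∈ Finset.range N, (-(2*t)) ^ i)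
    (by linear_combination -hg - hs)

lemma aux_local [IsLocalRing A] {I : Ideal A} (hI : I ≠ ⊤) : IsLocalRing (A ⧸ I) := by
  haveI := Ideal.Quotient.nontrivial_iff.mpr hI
  apply IsLocalRing.of_isUnit_or_isUnit_one_sub_self
  intro a
  obtain ⟨x, rfl⟩ := Ideal.Quotient.mk_surjective a
  rcases IsLocalRing.isUnit_or_isUnit_one_sub_self x with h | h
  · exact Or.inl (h.map _)
  · exact Or.inr (by simpa using h.map (Ideal.Quotient.mk I))

lemma aux_card [IsDomain A] (h2 : (2:A) ≠ 0) (N : ℕ) :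
    Nat.card (A ⧸ Ideal.span {(2:A)^N}) = (Nat.card (A ⧸ Ideal.span {(2:A)})) ^ N := by
  induction N with
  | zero =>
    have htop : Ideal.span {(2:A)^0} = ⊤ := by simpa using Ideal.span_singleton_one
    haveI : Subsingleton (A ⧸ Ideal.span {(2:A)^0}) :=
      Submodule.Quotient.subsingleton_iff.mpr htop
    simp [Nat.card_eq_one_iff_unique.mpr ⟨inferInstance, inferInstance⟩]
  | succ N ih =>
    set T : Ideal A := Ideal.span {(2:A)^(N+1)} with hT
    set S : Ideal A := Ideal.span {(2:A)^N} with hS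
    have hle : T ≤ S :=
      Ideal.span_singleton_le_span_singleton.mpr ⟨2, pow_succ 2 N⟩
    have key := Submodule.card_quotient_mul_card_quotient S T hle
    let ψ : A →ₗ[A] A ⧸ T := (2:A)^N • T.mkQ
    have hψ : ∀ x : A, ψ x = Submodule.Quotient.mk ((2:A)^N * x) := fun x => by
      simp only [ψ, LinearMap.smul_apply, Submodule.mkQ_apply,
        ← Submodule.Quotient.mk_smul, smul_eq_mul]
    have hker : LinearMap.ker ψ = Ideal.span {(2:A)} := by
      ext x
      rw [LinearMap.mem_ker, hψ, Submodule.Quotient.mk_eq_zero,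
        Ideal.mem_span_singleton, Ideal.mem_span_singleton]
      constructor
      · intro h
        have : (2:A)^N * 2 ∣ (2:A)^N * x := by
          rwa [pow_succ] at h
        exact (mul_dvd_mul_iff_left (pow_ne_zero N h2)).mp this
      · intro h
        rw [pow_succ]
        exact mul_dvd_mul_left _ h
    have hrange : LinearMap.range ψ = Submodule.map T.mkQ S := by
      ext q
      rw [LinearMap.mem_range]
      constructor
      · rintro ⟨x, rfl⟩
        exact ⟨(2:A)^N * x, Ideal.mem_span_singleton.mpr ⟨x, rfl⟩, (hψ x).symm⟩
      · rintro ⟨s, hs, rfl⟩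
        obtain ⟨c, rfl⟩ := Ideal.mem_span_singleton.mp hs
        exact ⟨c, hψ c⟩
    have e1 : Nat.card (Submodule.map T.mkQ S) = Nat.card (A ⧸ Ideal.span {(2:A)}) := by
      rw [← hrange, ← Nat.card_congr (LinearMap.quotKerEquivRange ψ).toEquiv, hker]
    rw [← key, e1, ih, pow_succ, mul_comm]

end Aux

lemma aux_root {A : Type*} [CommRing A] [IsLocalRing A] [Nontrivial A]
    (hmax : maximalIdeal A = Ideal.span {2})
    [IsAdicComplete (maximalIdeal A) A] (c : A) :
    ∃ a : A, a + a^2 = 2*c := by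
  have h2 : (2:A) ∈ maximalIdeal A := hmax ▸ Ideal.mem_span_singleton_self 2
  have hmonic : (X^2 + (X - C (2*c)) : A[X]).Monic := by
    apply monic_X_pow_add
    exact lt_of_le_of_lt (degree_X_sub_C_le _) (by norm_num)
  obtain ⟨a, ha, -⟩ := HenselianRing.is_henselian (I := maximalIdeal A)
    (X^2 + (X - C (2*c))) hmonic 0
    (by simp only [eval_add, eval_pow, eval_X, eval_sub, eval_C]
        simpa using (maximalIdeal A).neg_mem ((maximalIdeal A).mul_mem_right c h2))
    (by simp)
  refine ⟨a, ?_⟩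
  have : a^2 + (a - 2*c) = 0 := by simpa using ha
  linear_combination this


/-- for every `N ≥ 1`, the number of solutions of `x + x² = 2δy²`
in `(A/2^N A)²` equals `2·f^N`, where `f` is the cardinality of the residue field. -/
theorem card_solutions_smooth_model
    {A : Type*} [CommRing A] [IsDomain A] [IsDiscreteValuationRing A] [CharZero A]
    (hmax : IsLocalRing.maximalIdeal A = Ideal.span {2})
    [IsAdicComplete (IsLocalRing.maximalIdeal A) A]
    (f : ℕ) (hf : Nat.card (IsLocalRing.ResidueField A) = f)
    (δ : A) (hδunit : IsUnit δ) (hδ1 : (2 : A) ∣ (δ - 1)) :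
    ∀ N : ℕ, 1 ≤ N →
      Nat.card {p : (A ⧸ Ideal.span {(2 : A) ^ N}) × (A ⧸ Ideal.span {(2 : A) ^ N}) //
          p.1 + p.1 ^ 2 = Ideal.Quotient.mk (Ideal.span {(2 : A) ^ N}) (2 * δ) * p.2 ^ 2}
        = 2 * f ^ N := by
  intro N hN
  set I : Ideal A := Ideal.span {(2:A)^N} with hI
  set c : A ⧸ I := Ideal.Quotient.mk I (2 * δ) with hc
  -- 2 is not a unit and nonzero
  have h2mem : (2:A) ∈ maximalIdeal A := hmax ▸ Ideal.mem_span_singleton_self 2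
  have h2nu : ¬ IsUnit (2:A) := fun h => (mem_nonunits_iff.mp ((mem_maximalIdeal _).mp h2mem)) h
  have h2ne : (2:A) ≠ 0 := two_ne_zero
  have hInetop : I ≠ ⊤ := by
    rw [hI, Ne, Ideal.span_singleton_eq_top]
    intro h
    exact h2nu ((isUnit_pow_iff (by omega : N ≠ 0)).mp h)
  haveI : Nontrivial (A ⧸ I) := Ideal.Quotient.nontrivial_iff.mpr hInetop
  haveI : IsLocalRing (A ⧸ I) := aux_local hInetop
  -- cardinality of the quotient ring
  have hcardQ : Nat.card (A ⧸ I) = f ^ N := by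
    rw [hI, aux_card h2ne N]
    congr 1
    rw [← hf]
    exact (Nat.card_congr (Ideal.quotEquivOfEq hmax).toEquiv).symm
  -- roots
  have hroot : ∀ yb : A ⧸ I, ∃ a : A ⧸ I, a + a^2 = c * yb^2 := by
    intro yb
    obtain ⟨y, rfl⟩ := Ideal.Quotient.mk_surjective yb
    obtain ⟨r, hr⟩ := aux_root hmax (δ * y^2)
    refine ⟨Ideal.Quotient.mk I r, ?_⟩
    have h := congrArg (Ideal.Quotient.mk I) hr
    simp only [map_add, map_mul, map_pow] at h
    rw [hc, map_mul]
    push_cast at h ⊢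
    linear_combination h
  choose a ha using hroot
  have hdist : ∀ yb : A ⧸ I, a yb ≠ -1 - a yb := by
    intro yb h
    have h0 : (1 : A ⧸ I) + 2 * a yb = 0 := by linear_combination h
    exact (aux_unit_one_add N (a yb)).ne_zero h0
  have hclass : ∀ yb x : A ⧸ I, x + x^2 = c * yb^2 → x = a yb ∨ x = -1 - a yb := by
    intro yb x hx
    have hzero : (x - a yb) * (x + a yb + 1) = 0 := by linear_combination hx - ha yb
    have hunit : IsUnit ((x + a yb + 1) - (x - a yb)) := by
      have h : (x + a yb + 1) - (x - a yb) = 1 + 2 * a yb := by ring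
      rw [h]; exact aux_unit_one_add N (a yb)
    by_cases h : IsUnit (x - a yb)
    · right
      have h0 : x + a yb + 1 = 0 := (h.mul_right_eq_zero).mp hzero
      linear_combination h0
    · left
      have h1 : x - a yb ∈ maximalIdeal (A ⧸ I) := (mem_maximalIdeal _).mpr (mem_nonunits_iff.mpr h)
      have h2 : IsUnit (x + a yb + 1) := by
        by_contra h2
        have h2' : x + a yb + 1 ∈ maximalIdeal (A ⧸ I) := (mem_maximalIdeal _).mpr (mem_nonunits_iff.mpr h2)
        exact (mem_nonunits_iff.mp ((mem_maximalIdeal _).mp (Ideal.sub_mem _ h2' h1))) hunit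
      have h0 : x - a yb = 0 := (h2.mul_left_eq_zero).mp hzero
      linear_combination h0
  -- the bijection
  let F : (A ⧸ I) × Bool →
      {p : (A ⧸ I) × (A ⧸ I) // p.1 + p.1 ^ 2 = c * p.2 ^ 2} :=
    fun z => ⟨(if z.2 then a z.1 else -1 - a z.1, z.1), by
      rcases z with ⟨y, b⟩
      cases b
      · simpa using (by linear_combination ha y : (-1 - a y) + (-1 - a y)^2 = c * y^2)
      · simpa using ha y⟩
  have hbij : Function.Bijective F := by
    constructor
    · rintro ⟨y1, b1⟩ ⟨y2, b2⟩ h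
      have h2' := congrArg (fun s => s.1.2) h
      simp only [F] at h2'
      subst h2'
      have h1' := congrArg (fun s => s.1.1) h
      simp only [F] at h1'
      cases b1 <;> cases b2
      · rfl
      · exfalso
        simp only [Bool.false_eq_true, if_true, if_false] at h1'
        exact hdist y1 (by linear_combination -h1')
      · exfalso
        simp only [Bool.false_eq_true, if_true, if_false] at h1'
        exact hdist y1 h1'
      · rfl
    · rintro ⟨⟨x, y⟩, hp⟩
      rcases hclass y x hp with h | h
      · exact ⟨(y, true), Subtype.ext (by simp [F, h])⟩
      · exact ⟨(y, false), Subtype.ext (by simp [F, h])⟩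
  calc Nat.card {p : (A ⧸ I) × (A ⧸ I) // p.1 + p.1 ^ 2 = c * p.2 ^ 2}
      = Nat.card ((A ⧸ I) × Bool) := (Nat.card_congr (Equiv.ofBijective F hbij)).symm
    _ = 2 * f ^ N := by
        rw [Nat.card_prod, hcardQ]
        simp [Nat.card_eq_fintype_card, mul_comm]
end
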